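/- Suppose Φ : (0,r*) → (0,∞) is differentiable and satisfies Φ'(r) = (N−1)Φ(r)/r + 2Ψ(r) with rΨ(r)/Φ(r) ≤ C for all r ∈ (0,r*), where C > 0 is a constant. Then for every γ ∈ (0, r*/2), Φ(2γ) ≤ 2^{2C+N−1} Φ(γ). -/

import Mathlib

open MeasureTheory Metric Real Filter Bornology
open scoped Topology

noncomputable section

/-- `N`-dimensional Euclidean space. -/
abbrev ES (N : ℕ) : Type := EuclideanSpace ℝ (Fin N)

/-- Partial derivative of a complex-valued function in the `i`-th coordinate direction. -/
noncomputable def pd {N : ℕ} (i : Fin N) (f : ES N → ℂ) (x : ES N) : ℂ :=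
  fderiv ℝ f x (EuclideanSpace.single i 1)

/-- Partial derivative of a real-valued function in the `i`-th coordinate direction. -/
noncomputable def pdR {N : ℕ} (i : Fin N) (f : ES N → ℝ) (x : ES N) : ℝ :=
  fderiv ℝ f x (EuclideanSpace.single i 1)

/-- `∂ᵢ` of the `j`-th component of a vector field `V`, i.e. the entry `(DV)_{ij}` of the
Jacobian-type matrix `(DV)_{ij} = ∂ V_j / ∂ x_i`. -/
noncomputable def pdV {N : ℕ} (i j : Fin N) (V : ES N → ES N) (x : ES N) : ℝ :=
  fderiv ℝ (fun y => V y j) x (EuclideanSpace.single i 1)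

/-- `i`-th component of the magnetic gradient `H_A ω = i∇ω + Aω`. -/
noncomputable def magGrad {N : ℕ} (A : ES N → ES N) (ω : ES N → ℂ) (x : ES N) (i : Fin N) : ℂ :=
  Complex.I * pd i ω x + (A x i : ℂ) * ω x

/-- Squared modulus `|H_A ω|²` of the magnetic gradient. -/
noncomputable def magGradSq {N : ℕ} (A : ES N → ES N) (ω : ES N → ℂ) (x : ES N) : ℝ :=
  ∑ i, ‖magGrad A ω x i‖ ^ 2

/-- The electromagnetic Schrödinger equation
`-Δω + i A·∇ω + i ∇·(Aω) + |A|² ω = φ ω` holds pointwise on `s`. -/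
def IsSolutionOn {N : ℕ} (A : ES N → ES N) (φ ω : ES N → ℂ) (s : Set (ES N)) : Prop :=
  ∀ x ∈ s,
    -(∑ i, pd i (fun y => pd i ω y) x)
      + Complex.I * ∑ i, (A x i : ℂ) * pd i ω x
      + Complex.I * ∑ i, pd i (fun y => (A y i : ℂ) * ω y) x
      + ((∑ i, (A x i) ^ 2 : ℝ) : ℂ) * ω x
    = φ x * ω x

/-- Surface integral (real-valued integrand) over the sphere of radius `r` centred at the
origin, with respect to the `(N-1)`-dimensional Hausdorff measure. -/
noncomputable def sphInt {N : ℕ} (f : ES N → ℝ) (r : ℝ) : ℝ :=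
  ∫ x in sphere (0 : ES N) r, f x ∂μH[(N : ℝ) - 1]

/-- Surface integral (complex-valued integrand). -/
noncomputable def sphIntC {N : ℕ} (f : ES N → ℂ) (r : ℝ) : ℂ :=
  ∫ x in sphere (0 : ES N) r, f x ∂μH[(N : ℝ) - 1]

/-- Volume integral (real-valued integrand) over the open ball of radius `r` centred at the
origin. -/
noncomputable def ballInt {N : ℕ} (f : ES N → ℝ) (r : ℝ) : ℝ :=
  ∫ x in ball (0 : ES N) r, f x

/-- Volume integral (complex-valued integrand). -/
noncomputable def ballIntC {N : ℕ} (f : ES N → ℂ) (r : ℝ) : ℂ :=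
  ∫ x in ball (0 : ES N) r, f x

/-- `Φ(r) = ∫_{∂B_r} |ω|² dS`. -/
noncomputable def Phi {N : ℕ} (ω : ES N → ℂ) (r : ℝ) : ℝ :=
  sphInt (fun x => ‖ω x‖ ^ 2) r

/-- `Ψ(r) = ∫_{B_r} (|H_A ω|² - φ^R |ω|²) dV`. -/
noncomputable def Psi {N : ℕ} (A : ES N → ES N) (φ ω : ES N → ℂ) (r : ℝ) : ℝ :=
  ballInt (fun x => magGradSq A ω x - (φ x).re * ‖ω x‖ ^ 2) r

/-- `u ∈ L²_loc` vanishes of infinite order at `x₀`: for every `M ∈ ℕ` there are constants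
`C, R₀ > 0` with `∫_{|x - x₀| < R} |u|² ≤ C R^M` for all `0 < R < R₀`. -/
def VanishesInfOrder {N : ℕ} (u : ES N → ℂ) (x₀ : ES N) : Prop :=
  ∀ M : ℕ, ∃ C > (0 : ℝ), ∃ R₀ > (0 : ℝ), ∀ R : ℝ, 0 < R → R < R₀ →
    (∫ x in ball x₀ R, ‖u x‖ ^ 2) ≤ C * R ^ M

/-- The doubling estimate for `Φ`: if `Φ : (0,r*) → (0,∞)` is differentiable with
`Φ'(r) = (N-1)Φ(r)/r + 2Ψ(r)` and the frequency bound `rΨ(r)/Φ(r) ≤ C` holds on `(0,r*)`,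
then for every `γ ∈ (0, r*/2)`, `Φ(2γ) ≤ 2^{2C+N-1} Φ(γ)`. -/
theorem Phi_doubling
    (N : ℕ) (hN : 2 ≤ N) (rstar : ℝ) (hrstar : rstar ∈ Set.Ioo (0 : ℝ) 1)
    (Φ Ψ : ℝ → ℝ) (C : ℝ) (hC : 0 < C)
    (hΦpos : ∀ r ∈ Set.Ioo (0 : ℝ) rstar, 0 < Φ r)
    (hΦderiv : ∀ r ∈ Set.Ioo (0 : ℝ) rstar,
        HasDerivAt Φ (((N : ℝ) - 1) * Φ r / r + 2 * Ψ r) r)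
    (hfreq : ∀ r ∈ Set.Ioo (0 : ℝ) rstar, r * Ψ r / Φ r ≤ C) :
    ∀ γ ∈ Set.Ioo (0 : ℝ) (rstar / 2),
      Φ (2 * γ) ≤ (2 : ℝ) ^ (2 * C + (N : ℝ) - 1) * Φ γ := by
  intro γ hγ
  obtain ⟨hγ0, hγr⟩ := hγ
  set K : ℝ := 2 * C + (N : ℝ) - 1 with hK
  have h2γ : 2 * γ < rstar := by linarith
  -- the interval
  have hsub : Set.Icc γ (2 * γ) ⊆ Set.Ioo (0 : ℝ) rstar := by
    intro x hx
    exact ⟨lt_of_lt_of_le hγ0 hx.1, lt_of_le_of_lt hx.2 h2γ⟩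
  set f : ℝ → ℝ := fun r => Real.log (Φ r) - K * Real.log r with hf
  have hderiv : ∀ r ∈ Set.Ioo (0 : ℝ) rstar,
      HasDerivAt f ((((N : ℝ) - 1) * Φ r / r + 2 * Ψ r) / Φ r - K * r⁻¹) r := by
    intro r hr
    have hΦ := hΦpos r hr
    have h1 := (hΦderiv r hr).log (ne_of_gt hΦ)
    have h2 := (Real.hasDerivAt_log (ne_of_gt hr.1)).const_mul K
    exact h1.sub h2
  have hderiv_nonpos : ∀ r ∈ Set.Ioo (0 : ℝ) rstar,
      (((N : ℝ) - 1) * Φ r / r + 2 * Ψ r) / Φ r - K * r⁻¹ ≤ 0 := by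
    intro r hr
    have hΦ := hΦpos r hr
    have hr0 := hr.1
    have hfr := hfreq r hr
    -- r * Ψ r ≤ C * Φ r
    have h1 : r * Ψ r ≤ C * Φ r := by
      have := (div_le_iff₀ hΦ).mp hfr
      linarith
    rw [sub_nonpos, div_le_iff₀ hΦ]
    have hKr : K * r⁻¹ * Φ r = (2 * C + (N : ℝ) - 1) * Φ r / r := by
      field_simp
      exact hK
    rw [hKr, div_add' _ _ _ (ne_of_gt hr0), div_le_div_iff₀ hr0 hr0]
    nlinarith
  have hcont : ContinuousOn f (Set.Icc γ (2 * γ)) := by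
    intro x hx
    exact ((hderiv x (hsub hx)).continuousAt).continuousWithinAt
  have hanti : AntitoneOn f (Set.Icc γ (2 * γ)) := by
    apply antitoneOn_of_deriv_nonpos (convex_Icc _ _) hcont
    · intro x hx
      rw [interior_Icc] at hx
      exact ((hderiv x (hsub (Set.mem_Icc_of_Ioo hx))).differentiableAt).differentiableWithinAt
    · intro x hx
      rw [interior_Icc] at hx
      have hx' := hsub (Set.mem_Icc_of_Ioo hx)
      rw [(hderiv x hx').deriv]
      exact hderiv_nonpos x hx'
  have hγmem : γ ∈ Set.Icc γ (2 * γ) := ⟨le_refl _, by linarith⟩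
  have h2γmem : (2 * γ) ∈ Set.Icc γ (2 * γ) := ⟨by linarith, le_refl _⟩
  have hfle : f (2 * γ) ≤ f γ := hanti hγmem h2γmem (by linarith)
  have hΦγ := hΦpos γ (hsub hγmem)
  have hΦ2γ := hΦpos (2 * γ) (hsub h2γmem)
  -- unfold f
  have hlog2γ : Real.log (2 * γ) = Real.log 2 + Real.log γ :=
    Real.log_mul (by norm_num) (ne_of_gt hγ0)
  have hkey : Real.log (Φ (2 * γ)) ≤ K * Real.log 2 + Real.log (Φ γ) := by
    have := hfle
    simp only [hf, hlog2γ] at this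
    nlinarith [this]
  have h2K : (2 : ℝ) ^ K = Real.exp (K * Real.log 2) := by
    rw [Real.rpow_def_of_pos (by norm_num : (0:ℝ) < 2)]; ring_nf
  calc Φ (2 * γ) = Real.exp (Real.log (Φ (2 * γ))) := (Real.exp_log hΦ2γ).symm
    _ ≤ Real.exp (K * Real.log 2 + Real.log (Φ γ)) := Real.exp_le_exp.mpr hkey
    _ = (2 : ℝ) ^ K * Φ γ := by rw [Real.exp_add, h2K, Real.exp_log hΦγ]
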